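/- Let A ⊆ {1,...,N}, let h : ℤ^ℓ → ℤ satisfy h(H) ⊆ [−N/9, N/9] \ {0} for a finite set H ⊆ ℤ^ℓ, let δ = |A|/N, and define the balanced function f_A = 1_A − δ·1_{[1,N]}. If (A − A) ∩ h(H) = ∅ and |A ∩ (N/9, 8N/9)| ≥ 3δN/4, then Σ_{x ∈ ℤ} Σ_{n ∈ H} f_A(x) f_A(x + h(n)) ≤ −δ²N|H|/4. -/
import Mathlib

open MvPolynomial

/-- If `A ⊆ {1,…,N}` has density `δ`, `h(H) ⊆ [−N/9, N/9] \ {0}`,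
`(A − A) ∩ h(H) = ∅`, and `|A ∩ (N/9, 8N/9)| ≥ 3δN/4`, then
`Σ_x Σ_{n ∈ H} f_A(x) f_A(x + h(n)) ≤ −δ²N|H|/4` for the balanced function
`f_A = 1_A − δ·1_{[1,N]}` (the sum over `x` is supported in `[1,N]`). -/
theorem stmt_15 (N : ℕ) (hN : 0 < N) (ℓ : ℕ) (A : Finset ℤ)
    (hA : ∀ a ∈ A, a ∈ Finset.Icc (1 : ℤ) N)
    (δ : ℝ) (hδ : δ = A.card / N)
    (h : (Fin ℓ → ℤ) → ℤ) (H : Finset (Fin ℓ → ℤ))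
    (hH : ∀ n ∈ H, h n ≠ 0 ∧ |(h n : ℝ)| ≤ N / 9)
    (f : ℤ → ℝ)
    (hf : ∀ x : ℤ, f x = (if x ∈ A then (1 : ℝ) else 0)
      - δ * (if x ∈ Finset.Icc (1 : ℤ) N then (1 : ℝ) else 0))
    (hdiff : ∀ a ∈ A, ∀ a' ∈ A, ∀ n ∈ H, a - a' ≠ h n)
    (hmid : ((A.filter (fun a : ℤ => (N : ℝ) / 9 < (a : ℝ) ∧ (a : ℝ) < 8 * N / 9)).card : ℝ)
      ≥ 3 * δ * N / 4) :
    ∑ x ∈ Finset.Icc (1 : ℤ) N, ∑ n ∈ H, f x * f (x + h n)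
      ≤ - (δ ^ 2 * N * H.card / 4) := by
  classical
  have hδ0 : 0 ≤ δ := by rw [hδ]; positivity
  set I := Finset.Icc (1 : ℤ) N with hI
  set Amid := A.filter (fun a : ℤ => (N : ℝ) / 9 < (a : ℝ) ∧ (a : ℝ) < 8 * N / 9) with hAmid
  have hMsubA : Amid ⊆ A := Finset.filter_subset _ _
  have hcardI : (I.card : ℝ) = N := by
    rw [hI, Int.card_Icc]
    simp
  have key : ∀ n ∈ H, ∑ x ∈ I, f x * f (x + h n) ≤ - (δ ^ 2 * N / 2) := by
    intro n hn
    obtain ⟨hc0, hcN⟩ := hH n hn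
    set c := h n with hc
    have hmemI : ∀ y : ℤ, (0:ℝ) < (y:ℝ) → (y:ℝ) < N → y ∈ I := by
      intro y h1 h2
      have hy1 : 0 < y := by exact_mod_cast h1
      have hy2 : y < (N:ℤ) := by exact_mod_cast h2
      rw [hI, Finset.mem_Icc]
      omega
    have hmidmem : ∀ a ∈ Amid, (N:ℝ)/9 < (a:ℝ) ∧ (a:ℝ) < 8*N/9 := by
      intro a ha
      exact (Finset.mem_filter.mp ha).2
    have habs := abs_le.mp hcN
    -- expand the summand
    have expand : ∀ x ∈ I, f x * f (x + c) =
        (if x ∈ A then (1:ℝ) else 0) * (if x + c ∈ A then 1 else 0)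
        - δ * ((if x ∈ A then (1:ℝ) else 0) * (if x + c ∈ I then 1 else 0))
        - δ * (if x + c ∈ A then (1:ℝ) else 0)
        + δ^2 * (if x + c ∈ I then 1 else 0) := by
      intro x hx
      rw [hf x, hf (x + c)]
      simp only [hx, if_true]
      ring
    rw [Finset.sum_congr rfl expand]
    rw [Finset.sum_add_distrib, Finset.sum_sub_distrib, Finset.sum_sub_distrib,
      ← Finset.mul_sum, ← Finset.mul_sum, ← Finset.mul_sum]
    have h1 : ∑ x ∈ I, (if x ∈ A then (1:ℝ) else 0) * (if x + c ∈ A then 1 else 0) = 0 := by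
      apply Finset.sum_eq_zero
      intro x hx
      by_cases hxa : x ∈ A
      · by_cases hxc : x + c ∈ A
        · exact absurd (by ring : (x + c) - x = c) (hdiff _ hxc _ hxa n hn)
        · simp [hxc]
      · simp [hxa]
    have h2 : (Amid.card : ℝ) ≤
        ∑ x ∈ I, (if x ∈ A then (1:ℝ) else 0) * (if x + c ∈ I then 1 else 0) := by
      have e1 : (Amid.card : ℝ) = ∑ x ∈ Amid, (1:ℝ) := by simp
      rw [e1]
      have e2 : ∀ x ∈ Amid, (1:ℝ) = (if x ∈ A then (1:ℝ) else 0) * (if x + c ∈ I then 1 else 0) := by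
        intro x hx
        obtain ⟨hl, hr⟩ := hmidmem x hx
        have hxI : x + c ∈ I := by
          apply hmemI
          · push_cast; linarith
          · push_cast; linarith
        rw [if_pos (hMsubA hx), if_pos hxI, one_mul]
      rw [Finset.sum_congr rfl e2]
      apply Finset.sum_le_sum_of_subset_of_nonneg
      · exact fun a ha => hA a (hMsubA ha)
      · intro x _ _
        positivity
    have h3 : (Amid.card : ℝ) ≤ ∑ x ∈ I, (if x + c ∈ A then (1:ℝ) else 0) := by
      have e1 : (Amid.card : ℝ) = ∑ x ∈ Amid.image (fun a => a - c), (1:ℝ) := by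
        rw [Finset.sum_const, nsmul_eq_mul, mul_one,
          Finset.card_image_of_injective _ sub_left_injective]
      rw [e1]
      have e2 : ∀ x ∈ Amid.image (fun a => a - c), (1:ℝ) = (if x + c ∈ A then (1:ℝ) else 0) := by
        intro x hx
        obtain ⟨a, ha, rfl⟩ := Finset.mem_image.mp hx
        rw [sub_add_cancel, if_pos (hMsubA ha)]
      rw [Finset.sum_congr rfl e2]
      apply Finset.sum_le_sum_of_subset_of_nonneg
      · intro x hx
        obtain ⟨a, ha, rfl⟩ := Finset.mem_image.mp hx
        obtain ⟨hl, hr⟩ := hmidmem a ha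
        apply hmemI
        · push_cast; linarith
        · push_cast; linarith
      · intro x _ _
        positivity
    have h4 : ∑ x ∈ I, (if x + c ∈ I then (1:ℝ) else 0) ≤ N := by
      calc ∑ x ∈ I, (if x + c ∈ I then (1:ℝ) else 0) ≤ ∑ x ∈ I, (1:ℝ) := by
            apply Finset.sum_le_sum
            intro x _
            split <;> norm_num
        _ = N := by rw [Finset.sum_const, nsmul_eq_mul, mul_one, hcardI]
    rw [h1]
    linarith [mul_le_mul_of_nonneg_left h2 hδ0, mul_le_mul_of_nonneg_left h3 hδ0,
      mul_le_mul_of_nonneg_left h4 (sq_nonneg δ), mul_le_mul_of_nonneg_left hmid.le hδ0]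
  rw [Finset.sum_comm]
  calc ∑ n ∈ H, ∑ x ∈ I, f x * f (x + h n) ≤ ∑ n ∈ H, - (δ ^ 2 * N / 2) :=
        Finset.sum_le_sum key
    _ = H.card * (- (δ ^ 2 * N / 2)) := by rw [Finset.sum_const, nsmul_eq_mul]
    _ ≤ - (δ ^ 2 * N * H.card / 4) := by
        have h1 : (0:ℝ) ≤ δ ^ 2 * N := by positivity
        have h2 : (0:ℝ) ≤ H.card := Nat.cast_nonneg _
        nlinarith
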